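/- Let λ > 0 and let ψ : ℝ⁴ → ℂ, A = (A₁,…,A₄) : ℝ⁴ → ℝ⁴, and ξ : ℝ⁴ → ℝ be smooth, satisfying the gauge-augmented Ginzburg–Landau system: −Δ_Aψ + (λ/2)(|ψ|² − 1)ψ + i ξ ψ = 0 on ℝ⁴, and (d*dA)ⱼ − Im((∂ⱼψ − iAⱼψ)·conj(ψ)) + ∂ⱼξ = 0 on ℝ⁴ for j = 1,…,4. Then ξ satisfies Δξ = |ψ|² ξ on ℝ⁴. -/

import Mathlib

/- STATEMENT 18: for the gauge-augmented Ginzburg–Landau system, the gauge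
function ξ satisfies Δξ = |ψ|² ξ. -/

noncomputable section

open Complex MeasureTheory

/-- ℝ⁴ with the Euclidean structure. -/
abbrev R4 : Type := EuclideanSpace ℝ (Fin 4)

/-- Standard basis vectors of ℝ⁴. -/
def bvec (j : Fin 4) : R4 := EuclideanSpace.single j 1

/-- `j`-th partial derivative. -/
def pd {E : Type*} [NormedAddCommGroup E] [NormedSpace ℝ E]
    (j : Fin 4) (f : R4 → E) (x : R4) : E :=
  fderiv ℝ f x (bvec j)

/-- Euclidean Laplacian Δf = Σⱼ ∂ⱼ∂ⱼ f. -/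
def lap {E : Type*} [NormedAddCommGroup E] [NormedSpace ℝ E]
    (f : R4 → E) (x : R4) : E :=
  ∑ j, pd j (pd j f) x

/-- The covariant Laplacian Δ_A ψ = Δψ − i (div A) ψ − 2i Σⱼ Aⱼ ∂ⱼψ − |A|² ψ. -/
def covLap (A : R4 → R4) (ψ : R4 → ℂ) (x : R4) : ℂ :=
  lap ψ x - Complex.I * (↑(∑ j, pd j (fun y => A y j) x)) * ψ x
    - 2 * Complex.I * ∑ j, (↑(A x j) : ℂ) * pd j ψ x
    - (↑(∑ j, (A x j) ^ 2) : ℂ) * ψ x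

/-- (d*dA)ⱼ = −Σₖ ∂ₖ(∂ₖAⱼ − ∂ⱼAₖ). -/
def dStarDA (A : R4 → R4) (j : Fin 4) (x : R4) : ℝ :=
  - ∑ k, pd k (fun y => pd k (fun z => A z j) y - pd j (fun z => A z k) y) x

section helpers

variable {E F : Type*} [NormedAddCommGroup E] [NormedSpace ℝ E]
  [NormedAddCommGroup F] [NormedSpace ℝ F]

lemma dAt {f : R4 → E} (hf : ContDiff ℝ (⊤:ℕ∞) f) (x : R4) : DifferentiableAt ℝ f x :=
  (hf.differentiable (by norm_cast)) x

lemma pd_clm (j : Fin 4) (L : E →L[ℝ] F) (f : R4 → E) (x : R4)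
    (hf : DifferentiableAt ℝ f x) :
    pd j (fun y => L (f y)) x = L (pd j f x) := by
  unfold pd
  rw [show (fun y => L (f y)) = L ∘ f from rfl, fderiv_comp x L.differentiableAt hf, L.fderiv]
  rfl

lemma pd_sub (j : Fin 4) (f g : R4 → E) (x : R4)
    (hf : DifferentiableAt ℝ f x) (hg : DifferentiableAt ℝ g x) :
    pd j (fun y => f y - g y) x = pd j f x - pd j g x := by
  unfold pd; rw [fderiv_fun_sub hf hg]; rfl

lemma pd_neg (j : Fin 4) (f : R4 → E) (x : R4) :
    pd j (fun y => -f y) x = -pd j f x := by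
  unfold pd; rw [fderiv_fun_neg]; rfl

lemma pd_sum {ι : Type} (s : Finset ι) (j : Fin 4) (f : ι → R4 → E) (x : R4)
    (hf : ∀ i ∈ s, DifferentiableAt ℝ (f i) x) :
    pd j (fun y => ∑ i ∈ s, f i y) x = ∑ i ∈ s, pd j (f i) x := by
  unfold pd; rw [fderiv_fun_sum hf]; simp

lemma pd_mul (j : Fin 4) (f g : R4 → ℂ) (x : R4)
    (hf : DifferentiableAt ℝ f x) (hg : DifferentiableAt ℝ g x) :
    pd j (fun y => f y * g y) x = f x * pd j g x + g x * pd j f x := by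
  unfold pd; rw [fderiv_fun_mul hf hg]; simp

lemma pd_const_mul (j : Fin 4) (c : ℂ) (f : R4 → ℂ) (x : R4)
    (hf : DifferentiableAt ℝ f x) :
    pd j (fun y => c * f y) x = c * pd j f x := by
  unfold pd; rw [fderiv_const_mul hf]; simp

lemma pd_ofReal (j : Fin 4) (f : R4 → ℝ) (x : R4) (hf : DifferentiableAt ℝ f x) :
    pd j (fun y => ((f y : ℝ) : ℂ)) x = ((pd j f x : ℝ) : ℂ) :=
  pd_clm j Complex.ofRealCLM f x hf

lemma pd_im (j : Fin 4) (f : R4 → ℂ) (x : R4) (hf : DifferentiableAt ℝ f x) :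
    pd j (fun y => (f y).im) x = (pd j f x).im :=
  pd_clm j Complex.imCLM f x hf

lemma pd_conj (j : Fin 4) (f : R4 → ℂ) (x : R4) (hf : DifferentiableAt ℝ f x) :
    pd j (fun y => (starRingEnd ℂ) (f y)) x = (starRingEnd ℂ) (pd j f x) := by
  have := pd_clm j (Complex.conjCLE.toContinuousLinearMap) f x hf
  simpa using this

lemma contDiff_pd (j : Fin 4) (f : R4 → E) (hf : ContDiff ℝ (⊤:ℕ∞) f) :
    ContDiff ℝ (⊤:ℕ∞) (pd j f) :=
  (hf.fderiv_right (m := (⊤:ℕ∞)) (by norm_cast)).clm_apply contDiff_const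

lemma pd_comm (f : R4 → E) (hf : ContDiff ℝ (⊤:ℕ∞) f) (j k : Fin 4) (x : R4) :
    pd j (pd k f) x = pd k (pd j f) x := by
  have hd : ContDiff ℝ (⊤:ℕ∞) (fderiv ℝ f) := hf.fderiv_right (m := (⊤:ℕ∞)) (by norm_cast)
  have h1 : pd j (pd k f) x = fderiv ℝ (fderiv ℝ f) x (bvec j) (bvec k) := by
    have h : pd k f = fun y => (ContinuousLinearMap.apply ℝ E (bvec k)) (fderiv ℝ f y) := rfl
    rw [h, pd_clm j _ _ x (hd.differentiable (by norm_cast) x)]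
    rfl
  have h2 : pd k (pd j f) x = fderiv ℝ (fderiv ℝ f) x (bvec k) (bvec j) := by
    have h : pd j f = fun y => (ContinuousLinearMap.apply ℝ E (bvec j)) (fderiv ℝ f y) := rfl
    rw [h, pd_clm k _ _ x (hd.differentiable (by norm_cast) x)]
    rfl
  rw [h1, h2]
  exact (hf.contDiffAt.isSymmSndFDerivAt (by rw [minSmoothness_of_isRCLikeNormedField]; norm_cast)) _ _

end helpers

/-- If (ψ, A, ξ) is a smooth solution of the gauge-augmented Ginzburg–Landau
system, then Δξ = |ψ|² ξ. -/
theorem gauge_function_equation (lam : ℝ) (hlam : 0 < lam)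
    (ψ : R4 → ℂ) (A : R4 → R4) (ξ : R4 → ℝ)
    (hψ : ContDiff ℝ (⊤ : ℕ∞) ψ) (hA : ContDiff ℝ (⊤ : ℕ∞) A)
    (hξ : ContDiff ℝ (⊤ : ℕ∞) ξ)
    (heq1 : ∀ x : R4,
      -covLap A ψ x + (((lam / 2 * ((‖ψ x‖) ^ 2 - 1) : ℝ)) : ℂ) * ψ x
        + Complex.I * (↑(ξ x) : ℂ) * ψ x = 0)
    (heq2 : ∀ (x : R4) (j : Fin 4),
      dStarDA A j x
        - ((pd j ψ x - Complex.I * (↑(A x j)) * ψ x) * (starRingEnd ℂ) (ψ x)).im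
        + pd j ξ x = 0) :
    ∀ x : R4, lap ξ x = (‖ψ x‖) ^ 2 * ξ x := by
  intro x
  -- smoothness of the various building blocks
  have hAc : ∀ k : Fin 4, ContDiff ℝ (⊤:ℕ∞) (fun y => A y k) :=
    fun k => (EuclideanSpace.proj (𝕜 := ℝ) k).contDiff.comp hA
  have hAcC : ∀ k : Fin 4, ContDiff ℝ (⊤:ℕ∞) (fun y => ((A y k : ℝ) : ℂ)) :=
    fun k => Complex.ofRealCLM.contDiff.comp (hAc k)
  have hψj : ∀ j : Fin 4, ContDiff ℝ (⊤:ℕ∞) (pd j ψ) := fun j => contDiff_pd j ψ hψ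
  have hconj : ContDiff ℝ (⊤:ℕ∞) (fun y => (starRingEnd ℂ) (ψ y)) := by
    have := Complex.conjCLE.toContinuousLinearMap.contDiff.comp hψ
    exact this
  have hfst : ∀ j : Fin 4, ContDiff ℝ (⊤:ℕ∞)
      (fun y => pd j ψ y - Complex.I * (↑(A y j)) * ψ y) :=
    fun j => (hψj j).sub ((contDiff_const.mul (hAcC j)).mul hψ)
  have hF : ∀ j : Fin 4, ContDiff ℝ (⊤:ℕ∞)
      (fun y => (pd j ψ y - Complex.I * (↑(A y j)) * ψ y) * (starRingEnd ℂ) (ψ y)) :=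
    fun j => (hfst j).mul hconj
  have hB : ∀ j k : Fin 4, ContDiff ℝ (⊤:ℕ∞)
      (fun y => pd k (fun z => A z j) y - pd j (fun z => A z k) y) :=
    fun j k => (contDiff_pd k _ (hAc j)).sub (contDiff_pd j _ (hAc k))
  have hDst : ∀ j : Fin 4, ContDiff ℝ (⊤:ℕ∞) (fun y => dStarDA A j y) := by
    intro j
    unfold dStarDA
    exact (ContDiff.sum fun k _ => contDiff_pd k _ (hB j k)).neg
  -- the d*dA part sums to zero
  have hC0 : ∑ j : Fin 4, pd j (fun y => dStarDA A j y) x = 0 := by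
    have hterm : ∀ j : Fin 4, pd j (fun y => dStarDA A j y) x
        = -∑ k : Fin 4, (pd j (pd k (pd k (fun z => A z j))) x
            - pd j (pd k (pd j (fun z => A z k))) x) := by
      intro j
      have e1 : (fun y => dStarDA A j y)
          = fun y => -∑ k : Fin 4,
              pd k (fun y' => pd k (fun z => A z j) y' - pd j (fun z => A z k) y') y := rfl
      rw [e1, pd_neg, pd_sum _ _ _ _ (fun k _ => dAt (contDiff_pd k _ (hB j k)) x)]
      congr 1
      refine Finset.sum_congr rfl fun k _ => ?_
      have e2 : pd k (fun y' => pd k (fun z => A z j) y' - pd j (fun z => A z k) y')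
          = fun y => pd k (pd k (fun z => A z j)) y - pd k (pd j (fun z => A z k)) y := by
        funext y
        exact pd_sub k _ _ y (dAt (contDiff_pd k _ (hAc j)) y) (dAt (contDiff_pd j _ (hAc k)) y)
      rw [e2]
      exact pd_sub j _ _ x (dAt (contDiff_pd k _ (contDiff_pd k _ (hAc j))) x)
        (dAt (contDiff_pd k _ (contDiff_pd j _ (hAc k))) x)
    have swap : ∑ j : Fin 4, ∑ k : Fin 4, pd j (pd k (pd j (fun z => A z k))) x
        = ∑ j : Fin 4, ∑ k : Fin 4, pd j (pd k (pd k (fun z => A z j))) x := by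
      rw [Finset.sum_comm]
      exact Finset.sum_congr rfl fun j _ => Finset.sum_congr rfl fun k _ =>
        (pd_comm _ (contDiff_pd k _ (hAc j)) j k x).symm
    simp only [hterm, Finset.sum_neg_distrib, Finset.sum_sub_distrib]
    rw [swap]
    simp
  -- rewrite pd j ξ using heq2
  have hxi : ∀ j : Fin 4, pd j ξ = fun y =>
      ((pd j ψ y - Complex.I * (↑(A y j)) * ψ y) * (starRingEnd ℂ) (ψ y)).im
        - dStarDA A j y := by
    intro j; funext y; have h := heq2 y j; linarith
  have hpdF : ∀ j : Fin 4,
      pd j (fun y => (pd j ψ y - Complex.I * (↑(A y j)) * ψ y) * (starRingEnd ℂ) (ψ y)) x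
      = (pd j (pd j ψ) x - Complex.I * (↑(pd j (fun y => A y j) x)) * ψ x
          - Complex.I * (↑(A x j)) * pd j ψ x) * (starRingEnd ℂ) (ψ x)
        + (pd j ψ x - Complex.I * (↑(A x j)) * ψ x) * (starRingEnd ℂ) (pd j ψ x) := by
    intro j
    rw [pd_mul j _ _ x (dAt (hfst j) x) (dAt hconj x),
      pd_conj j ψ x (dAt hψ x),
      pd_sub j (pd j ψ) (fun y => Complex.I * (↑(A y j)) * ψ y) x (dAt (hψj j) x)
        (dAt ((contDiff_const.mul (hAcC j)).mul hψ) x),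
      pd_mul j (fun y => Complex.I * (↑(A y j) : ℂ)) ψ x
        (dAt (contDiff_const.mul (hAcC j)) x) (dAt hψ x),
      pd_const_mul j Complex.I (fun y => (↑(A y j) : ℂ)) x (dAt (hAcC j) x),
      pd_ofReal j (fun y => A y j) x (dAt (hAc j) x)]
    ring
  have hlap : lap ξ x = ∑ j : Fin 4,
      ((pd j (fun y => (pd j ψ y - Complex.I * (↑(A y j)) * ψ y) * (starRingEnd ℂ) (ψ y)) x).im
        - pd j (fun y => dStarDA A j y) x) := by
    unfold lap
    refine Finset.sum_congr rfl fun j _ => ?_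
    rw [hxi j,
      pd_sub j (fun y => ((pd j ψ y - Complex.I * (↑(A y j)) * ψ y)
          * (starRingEnd ℂ) (ψ y)).im) (fun y => dStarDA A j y) x
        (by exact dAt (Complex.imCLM.contDiff.comp (hF j)) x) (dAt (hDst j) x),
      pd_im j _ x (dAt (hF j) x)]
  rw [hlap, Finset.sum_sub_distrib, hC0, sub_zero]
  simp only [hpdF]
  rw [← Complex.im_sum]
  have h1 := heq1 x
  unfold covLap lap at h1
  have hsum : (∑ j : Fin 4,
      ((pd j (pd j ψ) x - Complex.I * (↑(pd j (fun y => A y j) x)) * ψ x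
          - Complex.I * (↑(A x j)) * pd j ψ x) * (starRingEnd ℂ) (ψ x)
        + (pd j ψ x - Complex.I * (↑(A x j)) * ψ x) * (starRingEnd ℂ) (pd j ψ x)))
      = ((lam / 2 * ((‖ψ x‖) ^ 2 - 1) : ℝ) : ℂ) * (ψ x * (starRingEnd ℂ) (ψ x))
        + Complex.I * (↑(ξ x) : ℂ) * (ψ x * (starRingEnd ℂ) (ψ x))
        + (↑(∑ j : Fin 4, (A x j) ^ 2) : ℂ) * (ψ x * (starRingEnd ℂ) (ψ x))
        + Complex.I * ((∑ j : Fin 4, (↑(A x j) : ℂ) * pd j ψ x) * (starRingEnd ℂ) (ψ x))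
        - Complex.I * (starRingEnd ℂ) ((∑ j : Fin 4, (↑(A x j) : ℂ) * pd j ψ x)
            * (starRingEnd ℂ) (ψ x))
        + ∑ j : Fin 4, pd j ψ x * (starRingEnd ℂ) (pd j ψ x) := by
    have expand : ∀ j : Fin 4,
        ((pd j (pd j ψ) x - Complex.I * (↑(pd j (fun y => A y j) x)) * ψ x
            - Complex.I * (↑(A x j)) * pd j ψ x) * (starRingEnd ℂ) (ψ x)
          + (pd j ψ x - Complex.I * (↑(A x j)) * ψ x) * (starRingEnd ℂ) (pd j ψ x))
        = pd j (pd j ψ) x * (starRingEnd ℂ) (ψ x)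
          - (Complex.I * (ψ x * (starRingEnd ℂ) (ψ x))) * (↑(pd j (fun y => A y j) x) : ℂ)
          - Complex.I * (((↑(A x j) : ℂ) * pd j ψ x) * (starRingEnd ℂ) (ψ x))
          - Complex.I * (starRingEnd ℂ) (((↑(A x j) : ℂ) * pd j ψ x) * (starRingEnd ℂ) (ψ x))
          + pd j ψ x * (starRingEnd ℂ) (pd j ψ x) := by
      intro j
      simp only [map_mul, Complex.conj_conj, Complex.conj_ofReal]
      ring
    rw [Finset.sum_congr rfl (fun j _ => expand j)]
    simp only [Finset.sum_add_distrib, Finset.sum_sub_distrib, ← Finset.sum_mul,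
      ← Finset.mul_sum, ← map_sum, ← Complex.ofReal_sum]
    push_cast at h1 ⊢
    linear_combination (-((starRingEnd ℂ) (ψ x))) * h1
  rw [hsum]
  simp only [Complex.mul_conj, ← Complex.ofReal_sum]
  simp only [Complex.add_im, Complex.sub_im, Complex.mul_im, Complex.mul_re,
    Complex.I_re, Complex.I_im, Complex.ofReal_re, Complex.ofReal_im,
    Complex.conj_re, Complex.conj_im, Complex.sq_norm]
  ring


end
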